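/- Version-space reduction is adaptive submodular in the noiseless case: define for a partial observation (a partial function x from feature indices to values consistent with at least one hypothesis) the objective f(x) = N − |{h : V_h consistent with x}|. Then the expected marginal gain of observing feature k given partial observation x, under the uniform prior restricted to hypotheses consistent with x, is non-increasing as x is extended to any consistent refinement x'. -/

import Mathlib

open scoped Classical in
/-- Hypotheses consistent with a partial observation `x` (a partial function from
feature indices to values): those whose feature vector agrees with `x` wherever `x`
is defined. -/
noncomputable def cons {H Val : Type*} [Fintype H] {K : ℕ}
    (Vh : H → Fin K → Val) (x : Fin K → Option Val) : Finset H :=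
  Finset.univ.filter fun h => ∀ k v, x k = some v → Vh h k = v

/-- Extend a partial observation by the value `v` for feature `k`. -/
def upd {Val : Type*} {K : ℕ} (x : Fin K → Option Val) (k : Fin K) (v : Val) :
    Fin K → Option Val :=
  fun k' => if k' = k then some v else x k'

/-- Expected marginal gain of observing feature `k` at partial observation `x`, for
the objective `f(x) = N - |{h consistent with x}|`, under the uniform prior
restricted to the consistent hypotheses:
`Δ(k|x) = Σ_v P(V_H(k) = v | consistent with x) · (f(x ∪ {k ↦ v}) - f(x))`. -/
noncomputable def gain {H Val : Type*} [Fintype H] [Fintype Val] {K : ℕ}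
    (Vh : H → Fin K → Val) (x : Fin K → Option Val) (k : Fin K) : ℝ :=
  ∑ v : Val, (((cons Vh (upd x k v)).card : ℝ) / ((cons Vh x).card : ℝ)) *
    (((cons Vh x).card : ℝ) - ((cons Vh (upd x k v)).card : ℝ))


open scoped Classical

lemma cons_subset {H Val : Type*} [Fintype H] {K : ℕ}
    (Vh : H → Fin K → Val) {x x' : Fin K → Option Val}
    (hext : ∀ (k : Fin K) (v : Val), x k = some v → x' k = some v) :
    cons Vh x' ⊆ cons Vh x := by
  intro h hh
  simp only [cons, Finset.mem_filter, Finset.mem_univ, true_and] at hh ⊢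
  exact fun k v hkv => hh k v (hext k v hkv)

lemma cons_upd_eq {H Val : Type*} [Fintype H] {K : ℕ}
    (Vh : H → Fin K → Val) {x : Fin K → Option Val} {k : Fin K}
    (hk : x k = none) (v : Val) :
    cons Vh (upd x k v) = (cons Vh x).filter fun h => Vh h k = v := by
  ext h
  simp only [cons, Finset.mem_filter, Finset.mem_univ, true_and]
  simp only [upd]
  constructor
  · intro hh
    refine ⟨fun k' w hkw => ?_, hh k v (by simp)⟩
    by_cases hkk : k' = k
    · rw [hkk, hk] at hkw; exact absurd hkw (by simp)
    · exact hh k' w (by simp [hkk, hkw])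
  · rintro ⟨hh, hv⟩ k' w hkw
    by_cases hkk : k' = k
    · subst hkk
      simp only [if_true, Option.some.injEq] at hkw
      rw [hv, hkw]
    · exact hh k' w (by simpa [hkk] using hkw)

lemma cons_card_sum {H Val : Type*} [Fintype H] [Fintype Val] {K : ℕ}
    (Vh : H → Fin K → Val) {x : Fin K → Option Val} {k : Fin K}
    (hk : x k = none) :
    ∑ v : Val, (cons Vh (upd x k v)).card = (cons Vh x).card := by
  rw [Finset.card_eq_sum_card_fiberwise
    (f := fun h => Vh h k) (t := Finset.univ) (fun a _ => Finset.mem_univ _)]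
  exact Finset.sum_congr rfl fun v _ => by rw [cons_upd_eq Vh hk v]

lemma key_ineq {a b c d : ℝ} (hb : 0 ≤ b) (hc : 0 ≤ c)
    (hba : b ≤ a) (hcd : c ≤ d) (h1 : 0 < b + c) (h2 : 0 < a + d) :
    b * c / (b + c) ≤ a * d / (a + d) := by
  rw [div_le_div_iff₀ h1 h2]
  nlinarith [mul_nonneg (mul_nonneg (hb.trans hba) hb) (sub_nonneg.2 hcd),
    mul_nonneg (mul_nonneg hc (hc.trans hcd)) (sub_nonneg.2 hba)]
theorem version_space_reduction_adaptive_submodular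
    {H Val : Type*} [Fintype H] [Fintype Val] {K : ℕ}
    (Vh : H → Fin K → Val) (x x' : Fin K → Option Val)
    (hext : ∀ (k : Fin K) (v : Val), x k = some v → x' k = some v)
    (hx : (cons Vh x).Nonempty) (hx' : (cons Vh x').Nonempty)
    (k : Fin K) (hk : x' k = none) :
    gain Vh x' k ≤ gain Vh x k := by
  have hxk : x k = none := by
    cases hxv : x k with
    | none => rfl
    | some v => rw [hext k v hxv] at hk; exact absurd hk (by simp)
  set a : Val → ℝ := fun v => ((cons Vh (upd x k v)).card : ℝ) with ha
  set b : Val → ℝ := fun v => ((cons Vh (upd x' k v)).card : ℝ) with hb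
  set n : ℝ := ((cons Vh x).card : ℝ) with hn
  set n' : ℝ := ((cons Vh x').card : ℝ) with hn'
  have hnpos : 0 < n := by
    rw [hn]; exact_mod_cast Finset.card_pos.2 hx
  have hn'pos : 0 < n' := by
    rw [hn']; exact_mod_cast Finset.card_pos.2 hx'
  have hba : ∀ v, b v ≤ a v := by
    intro v
    show ((cons Vh (upd x' k v)).card : ℝ) ≤ ((cons Vh (upd x k v)).card : ℝ)
    have : cons Vh (upd x' k v) ⊆ cons Vh (upd x k v) := by
      apply cons_subset
      intro k' w hw
      unfold upd at hw ⊢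
      by_cases hkk : k' = k
      · rwa [if_pos hkk] at hw ⊢
      · rw [if_neg hkk] at hw ⊢
        exact hext k' w hw
    exact_mod_cast Finset.card_le_card this
  have hbnn : ∀ v, 0 ≤ b v := fun v => Nat.cast_nonneg _
  have hann : ∀ v, 0 ≤ a v := fun v => Nat.cast_nonneg _
  have hsuma : ∑ v : Val, a v = n := by
    rw [ha, hn]; beta_reduce; exact_mod_cast cons_card_sum Vh hxk
  have hsumb : ∑ v : Val, b v = n' := by
    rw [hb, hn']; beta_reduce; exact_mod_cast cons_card_sum Vh hk
  have hrest0 : ∀ v : Val, 0 ≤ n' - b v := by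
    intro v
    have h1 : b v + ∑ w ∈ Finset.univ.erase v, b w = n' := by
      rw [Finset.add_sum_erase _ _ (Finset.mem_univ v), hsumb]
    have h2 : 0 ≤ ∑ w ∈ Finset.univ.erase v, b w :=
      Finset.sum_nonneg fun w _ => hbnn w
    linarith
  have hrest : ∀ v : Val, n' - b v ≤ n - a v := by
    intro v
    have h1 : b v + ∑ w ∈ Finset.univ.erase v, b w = n' := by
      rw [Finset.add_sum_erase _ _ (Finset.mem_univ v), hsumb]
    have h2 : a v + ∑ w ∈ Finset.univ.erase v, a w = n := by
      rw [Finset.add_sum_erase _ _ (Finset.mem_univ v), hsuma]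
    have h3 : ∑ w ∈ Finset.univ.erase v, b w ≤ ∑ w ∈ Finset.univ.erase v, a w :=
      Finset.sum_le_sum fun w _ => hba w
    linarith
  unfold gain
  apply Finset.sum_le_sum
  intro v _
  rw [div_mul_eq_mul_div, div_mul_eq_mul_div]
  have key := key_ineq (hbnn v) (hrest0 v)
    (hba v) (hrest v) (by linarith : (0:ℝ) < b v + (n' - b v))
    (by linarith : (0:ℝ) < a v + (n - a v))
  have e1 : b v + (n' - b v) = n' := by ring
  have e2 : a v + (n - a v) = n := by ring
  rw [e1, e2] at key
  exact key
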